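/- Let C = (L_1, L_2, ...) be a countable collection of languages, let m*(L_1), m*(L_2), ... be the non-uniform complexities computed by Procedure 1, and let f : ℕ → ℕ be any non-decreasing function with f(t) → ∞ as t → ∞. Then there exists a generating algorithm G that non-uniformly generates from C with generation times t_G(L_i) ≤ max(g(i), m*(L_i) + 1) for every i, where g(i) is the smallest number j for which f(j) ≥ i. -/

import Mathlib

/-- A valid subcollection for the check in Procedure 1: a finite set `s` of language
indices drawn from the prefix `pre` (or equal to `last`), which contains `last`, and
whose intersection `⋂ k ∈ s, L k` is finite. -/
def ValidSub (L : ℕ → Set ℕ) (pre : List ℕ) (last : ℕ) (s : Finset ℕ) : Prop :=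
  last ∈ s ∧ (∀ k ∈ s, k = last ∨ k ∈ pre) ∧ (⋂ k ∈ s, L k).Finite

/-- `m` is the value `m_chk` computed in the while loop of Procedure 1 for the prefix
`pre` followed by the language `last`: the largest size of a finite intersection of a
subcollection containing `last` (and `0` if no such subcollection exists). -/
def IsMchk (L : ℕ → Set ℕ) (pre : List ℕ) (last : ℕ) (m : ℕ) : Prop :=
  ((¬ ∃ s, ValidSub L pre last s) ∧ m = 0) ∨
    ((∃ s, ValidSub L pre last s ∧ (⋂ k ∈ s, L k).ncard = m) ∧
      ∀ s, ValidSub L pre last s → (⋂ k ∈ s, L k).ncard ≤ m)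

/-- `s` is a witness subcollection `C_chk` realizing `m = m_chk` (with `s = ∅`, `m = 0`
if no valid subcollection exists). -/
def WitnessAt (L : ℕ → Set ℕ) (pre : List ℕ) (last : ℕ) (s : Finset ℕ) (m : ℕ) : Prop :=
  ((¬ ∃ s', ValidSub L pre last s') ∧ s = ∅ ∧ m = 0) ∨
    (ValidSub L pre last s ∧ (⋂ k ∈ s, L k).ncard = m ∧
      ∀ s', ValidSub L pre last s' → (⋂ k ∈ s', L k).ncard ≤ m)

/-- A run of Procedure 1 (insertion sort for non-uniform generation) on the collection
`L 0, L 1, L 2, ...` (0-based indexing: `L i` is the paper's `L_{i+1}`).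
`ord i` is the ordering `C'_i` (a list of original indices, a permutation of
`0, ..., i-1`), `pos i` is the (0-based) position at which language `i` is finally
inserted during iteration `i`, `wit i` is the witness subcollection `C(L_i)` (a finite
set of original indices) and `mstar i` is the non-uniform complexity `m*(L_i)`. -/
structure Proc1Run (L : ℕ → Set ℕ) where
  ord : ℕ → List ℕ
  pos : ℕ → ℕ
  wit : ℕ → Finset ℕ
  mstar : ℕ → ℕ
  ord_zero : ord 0 = []
  pos_le : ∀ i, pos i ≤ i
  /-- `C'_{i+1}` is obtained from `C'_i` by inserting language `i` at position `pos i`. -/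
  ord_succ : ∀ i, ord (i + 1) = (ord i).take (pos i) ++ i :: (ord i).drop (pos i)
  /-- While moving language `i` forward through each intermediate position `q` with
  `pos i < q ≤ i`, the while loop did not break: the value `m_chk` computed there was
  at most `m*` of the preceding language. -/
  moved : ∀ i q, pos i < q → q ≤ i →
    ∀ m, IsMchk L ((ord i).take q) i m → m ≤ mstar ((ord i).getD (q - 1) 0)
  /-- At the final position the while loop broke: either `j ≤ 1` or `m_chk > m*` of the
  preceding language. -/
  stopped : ∀ i, pos i = 0 ∨ mstar ((ord i).getD (pos i - 1) 0) < mstar i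
  /-- `C(L_i)` and `m*(L_i)` are the witness subcollection and maximal value computed at
  the final position. -/
  wit_spec : ∀ i, WitnessAt L ((ord i).take (pos i)) i (wit i) (mstar i)

/-- The input prefix `x_1, ..., x_t` presented to the algorithm at time `t`. -/
def inputList (x : ℕ → ℕ) (t : ℕ) : List ℕ := (List.range t).map x

/-- `S_t`: the set of distinct strings among the first `t` inputs. -/
def Sfin (x : ℕ → ℕ) (t : ℕ) : Finset ℕ := (inputList x t).toFinset

/-- `x` is an enumeration of the language `Lang`: every term lies in `Lang` and every
string of `Lang` appears at some finite time. -/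
def IsEnumOf (x : ℕ → ℕ) (Lang : Set ℕ) : Prop :=
  (∀ t, x t ∈ Lang) ∧ ∀ s ∈ Lang, ∃ t, x t = s

/-- The (deterministic) generating algorithm `G` non-uniformly generates from the
collection `L` with generation times `tG`: for every language `L i` and every
enumeration of it, at every time `t ≥ 1` with `|S_t| ≥ tG i` the output is a new
string of `L i`. -/
def NonUniformGen (G : List ℕ → ℕ) (L : ℕ → Set ℕ) (tG : ℕ → ℕ) : Prop :=
  ∀ i (x : ℕ → ℕ), IsEnumOf x (L i) → ∀ t, 1 ≤ t → tG i ≤ (Sfin x t).card →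
    G (inputList x t) ∈ L i \ ↑(Sfin x t)

open Classical

lemma witnessAt_le {L : ℕ → Set ℕ} {pre : List ℕ} {last : ℕ} {s : Finset ℕ} {m : ℕ}
    (h : WitnessAt L pre last s m) :
    ∀ s', ValidSub L pre last s' → (⋂ k ∈ s', L k).ncard ≤ m := by
  intro s' hs'
  rcases h with ⟨hno, _, _⟩ | ⟨_, _, hub⟩
  · exact absurd ⟨s', hs'⟩ hno
  · exact hub s' hs'

lemma validSub_mono {L : ℕ → Set ℕ} {pre pre' : List ℕ} {last : ℕ} {s : Finset ℕ}
    (hsub : ∀ k ∈ pre, k ∈ pre') (h : ValidSub L pre last s) : ValidSub L pre' last s :=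
  ⟨h.1, fun k hk => (h.2.1 k hk).imp id (hsub k), h.2.2⟩

lemma exists_isMchk (L : ℕ → Set ℕ) (pre : List ℕ) (last : ℕ) : ∃ m, IsMchk L pre last m := by
  by_cases h : ∃ s, ValidSub L pre last s
  · obtain ⟨s0, hs0⟩ := h
    set F := (insert last pre.toFinset).powerset.filter (fun s => ValidSub L pre last s) with hF
    have hmem : ∀ s, ValidSub L pre last s → s ∈ F := by
      intro s hs
      simp only [hF, Finset.mem_filter, Finset.mem_powerset]
      refine ⟨fun k hk => ?_, hs⟩
      rcases hs.2.1 k hk with h | h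
      · exact Finset.mem_insert.mpr (Or.inl h)
      · exact Finset.mem_insert.mpr (Or.inr (List.mem_toFinset.mpr h))
    have hne : (F.image (fun s => (⋂ k ∈ s, L k).ncard)).Nonempty :=
      ⟨_, Finset.mem_image_of_mem _ (hmem s0 hs0)⟩
    refine ⟨(F.image fun s => (⋂ k ∈ s, L k).ncard).max' hne, Or.inr ⟨?_, ?_⟩⟩
    · obtain ⟨v, hv, hveq⟩ := Finset.mem_image.mp ((F.image fun s => (⋂ k ∈ s, L k).ncard).max'_mem hne)
      exact ⟨v, (Finset.mem_filter.mp hv).2, hveq⟩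
    · intro s hs
      exact Finset.le_max' (F.image fun s => (⋂ k ∈ s, L k).ncard) _ (Finset.mem_image_of_mem _ (hmem s hs))
  · exact ⟨0, Or.inl ⟨h, rfl⟩⟩

lemma witnessAt_le_isMchk {L : ℕ → Set ℕ} {pre pre' : List ℕ} {last : ℕ} {s : Finset ℕ} {m m' : ℕ}
    (h : WitnessAt L pre last s m) (hsub : ∀ k ∈ pre, k ∈ pre')
    (h' : IsMchk L pre' last m') : m ≤ m' := by
  rcases h with ⟨_, _, hm⟩ | ⟨hv, hcard, _⟩
  · omega
  · have hv' := validSub_mono hsub hv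
    rcases h' with ⟨hno, _⟩ | ⟨_, hub⟩
    · exact absurd ⟨s, hv'⟩ hno
    · exact hcard ▸ hub s hv'

variable {L : ℕ → Set ℕ} (R : Proc1Run L)

lemma length_ord : ∀ n, (R.ord n).length = n := by
  intro n
  induction n with
  | zero => simp [R.ord_zero]
  | succ n ih =>
    have hp := R.pos_le n
    simp [R.ord_succ n, List.length_take, List.length_drop, ih]
    omega

lemma mem_ord : ∀ n k, k ∈ R.ord n ↔ k < n := by
  intro n
  induction n with
  | zero => simp [R.ord_zero]
  | succ n ih =>
    intro k
    rw [R.ord_succ n]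
    constructor
    · intro hk
      rcases List.mem_append.mp hk with h | h
      · have := (ih k).mp (List.mem_of_mem_take h); omega
      · rcases List.mem_cons.mp h with h | h
        · omega
        · have := (ih k).mp (List.mem_of_mem_drop h); omega
    · intro hk
      rcases Nat.lt_succ_iff_lt_or_eq.mp hk with h | h
      · have : k ∈ R.ord n := (ih k).mpr h
        conv at this => rw [← List.take_append_drop (R.pos n) (R.ord n)]
        rcases List.mem_append.mp this with h | h
        · exact List.mem_append.mpr (Or.inl h)
        · exact List.mem_append.mpr (Or.inr (List.mem_cons_of_mem _ h))
      · subst h; exact List.mem_append.mpr (Or.inr (List.mem_cons_self))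

lemma getD_succ_lt {n p : ℕ} (hp : p < R.pos n) :
    (R.ord (n+1)).getD p 0 = (R.ord n).getD p 0 := by
  have hl := length_ord R n
  have hp' := R.pos_le n
  have h1 : p < (R.ord (n+1)).length := by rw [length_ord]; omega
  have h2 : p < (R.ord n).length := by omega
  have htl : ((R.ord n).take (R.pos n)).length = R.pos n := by
    rw [List.length_take]; omega
  rw [List.getD_eq_getElem _ _ h1, List.getD_eq_getElem _ _ h2]
  have h3 : p < ((R.ord n).take (R.pos n)).length := by omega
  simp only [R.ord_succ n]
  rw [List.getElem_append_left h3, List.getElem_take]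

lemma getD_succ_eq (n : ℕ) : (R.ord (n+1)).getD (R.pos n) 0 = n := by
  have hl := length_ord R n
  have hp' := R.pos_le n
  have h1 : R.pos n < (R.ord (n+1)).length := by rw [length_ord]; omega
  have htl : ((R.ord n).take (R.pos n)).length = R.pos n := by
    rw [List.length_take]; omega
  rw [List.getD_eq_getElem _ _ h1]
  simp only [R.ord_succ n]
  rw [List.getElem_append_right (by omega)]
  simp [htl]

lemma getD_succ_gt {n p : ℕ} (hp : R.pos n < p) (hpn : p ≤ n) :
    (R.ord (n+1)).getD p 0 = (R.ord n).getD (p-1) 0 := by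
  have hl := length_ord R n
  have hp' := R.pos_le n
  have h1 : p < (R.ord (n+1)).length := by rw [length_ord]; omega
  have h2 : p - 1 < (R.ord n).length := by omega
  have htl : ((R.ord n).take (R.pos n)).length = R.pos n := by
    rw [List.length_take]; omega
  rw [List.getD_eq_getElem _ _ h1, List.getD_eq_getElem _ _ h2]
  simp only [R.ord_succ n]
  rw [List.getElem_append_right (by omega)]
  have h3 : p - ((R.ord n).take (R.pos n)).length = (p - R.pos n - 1) + 1 := by omega
  -- element of cons at index ≥ 1
  simp only [h3, List.getElem_cons_succ]
  rw [List.getElem_drop]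
  congr 1
  omega

lemma take_succ_le {n q : ℕ} (hq : q ≤ R.pos n) :
    (R.ord (n+1)).take q = (R.ord n).take q := by
  have hl := length_ord R n
  have hp' := R.pos_le n
  have htl : ((R.ord n).take (R.pos n)).length = R.pos n := by
    rw [List.length_take]; omega
  rw [R.ord_succ n, List.take_append, htl]
  have : q - R.pos n = 0 := by omega
  rw [this]
  simp [List.take_take, Nat.min_eq_left hq]

lemma mem_take_succ_gt {n q k : ℕ} (hq : R.pos n < q) :
    k ∈ (R.ord (n+1)).take q ↔ k = n ∨ k ∈ (R.ord n).take (q-1) := by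
  have hl := length_ord R n
  have hp' := R.pos_le n
  have htl : ((R.ord n).take (R.pos n)).length = R.pos n := by
    rw [List.length_take]; omega
  have hq1 : (R.ord n).take (q-1) = (R.ord n).take (R.pos n) ++ ((R.ord n).drop (R.pos n)).take (q - 1 - R.pos n) := by
    conv_lhs => rw [← List.take_append_drop (R.pos n) (R.ord n)]
    rw [List.take_append, htl, List.take_take, Nat.min_eq_right (by omega)]
  rw [R.ord_succ n, List.take_append, htl, List.take_take,
    Nat.min_eq_right (by omega)]
  have hqp : q - R.pos n = (q - R.pos n - 1) + 1 := by omega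
  rw [hqp, List.take_succ_cons, hq1]
  simp only [List.mem_append, List.mem_cons]
  have : q - R.pos n - 1 = q - 1 - R.pos n := by omega
  rw [this]
  tauto

lemma mem_take_mono {l : List ℕ} {a b : ℕ} (h : a ≤ b) {k : ℕ} (hk : k ∈ l.take a) :
    k ∈ l.take b := by
  have : (l.take b).take a = l.take a := by rw [List.take_take, Nat.min_eq_left h]
  rw [← this] at hk
  exact List.mem_of_mem_take hk

lemma adj_mono : ∀ n p, p + 1 < n →
    R.mstar ((R.ord n).getD p 0) ≤ R.mstar ((R.ord n).getD (p+1) 0) := by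
  intro n
  induction n with
  | zero => omega
  | succ n ih =>
    intro p hp
    have hp' := R.pos_le n
    rcases lt_trichotomy (p+1) (R.pos n) with h | h | h
    · rw [getD_succ_lt R h, getD_succ_lt R (by omega)]
      exact ih p (by omega)
    · have e1 : (R.ord (n+1)).getD (p+1) 0 = n := by rw [h]; exact getD_succ_eq R n
      rw [e1, getD_succ_lt R (by omega)]
      rcases R.stopped n with h0 | h0
      · omega
      · rw [← h, Nat.add_sub_cancel] at h0
        exact h0.le
    · -- p + 1 > pos n
      rcases Nat.eq_or_lt_of_le (Nat.le_of_lt_succ h) with heq | hlt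
      · -- p = pos n
        subst heq
        rw [getD_succ_eq R n, getD_succ_gt R (by omega) (by omega), Nat.add_sub_cancel]
        obtain ⟨m, hm⟩ := exists_isMchk L ((R.ord n).take (R.pos n + 1)) n
        have h1 : R.mstar n ≤ m :=
          witnessAt_le_isMchk (R.wit_spec n) (fun k hk => mem_take_mono (by omega) hk) hm
        have h2 := R.moved n (R.pos n + 1) (by omega) (by omega) m hm
        rw [Nat.add_sub_cancel] at h2
        exact h1.trans h2
      · -- pos n < p
        rw [getD_succ_gt R hlt (by omega), getD_succ_gt R (by omega) (by omega)]
        have e2 : p + 1 - 1 = (p - 1) + 1 := by omega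
        rw [e2]
        exact ih (p-1) (by omega)

lemma mstar_mono (n : ℕ) : ∀ q p, p ≤ q → q < n →
    R.mstar ((R.ord n).getD p 0) ≤ R.mstar ((R.ord n).getD q 0) := by
  intro q
  induction q with
  | zero => intro p hpq hq; rw [Nat.le_zero.mp hpq]
  | succ q ih =>
    intro p hpq hq
    rcases Nat.eq_or_lt_of_le hpq with h | h
    · rw [h]
    · exact (ih p (by omega) (by omega)).trans (adj_mono R n q hq)

lemma isMchk_le {L : ℕ → Set ℕ} {pre : List ℕ} {last m : ℕ} {s : Finset ℕ}
    (hm : IsMchk L pre last m) (hs : ValidSub L pre last s) :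
    (⋂ k ∈ s, L k).ncard ≤ m := by
  rcases hm with ⟨hno, _⟩ | ⟨_, hub⟩
  · exact absurd ⟨s, hs⟩ hno
  · exact hub s hs

lemma inv : ∀ n p, p < n → ∀ s : Finset ℕ,
    (∀ k ∈ s, k ∈ (R.ord n).take (p+1)) → (R.ord n).getD p 0 ∈ s →
    (⋂ k ∈ s, L k).Finite →
    (⋂ k ∈ s, L k).ncard ≤ R.mstar ((R.ord n).getD p 0) := by
  intro n
  induction n with
  | zero => omega
  | succ n ih =>
    intro p hp s hsub hmem hfin
    have hp' := R.pos_le n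
    rcases lt_trichotomy p (R.pos n) with h | h | h
    · rw [take_succ_le R (by omega)] at hsub
      rw [getD_succ_lt R h] at hmem ⊢
      exact ih p (by omega) s hsub hmem hfin
    · subst h
      rw [getD_succ_eq R n] at hmem ⊢
      have hv : ValidSub L ((R.ord n).take (R.pos n)) n s := by
        refine ⟨hmem, fun k hk => ?_, hfin⟩
        have := (mem_take_succ_gt R (by omega)).mp (hsub k hk)
        simpa using this
      exact witnessAt_le (R.wit_spec n) s hv
    · rw [getD_succ_gt R h (by omega)] at hmem ⊢
      have hsub' : ∀ k ∈ s, k = n ∨ k ∈ (R.ord n).take p := by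
        intro k hk
        have := (mem_take_succ_gt R (show R.pos n < p + 1 by omega)).mp (hsub k hk)
        simpa using this
      by_cases hn : n ∈ s
      · have hv : ValidSub L ((R.ord n).take p) n s := ⟨hn, hsub', hfin⟩
        obtain ⟨m, hm⟩ := exists_isMchk L ((R.ord n).take p) n
        exact (isMchk_le hm hv).trans (R.moved n p h (by omega) m hm)
      · have hsub'' : ∀ k ∈ s, k ∈ (R.ord n).take ((p-1)+1) := by
          intro k hk
          rcases hsub' k hk with h | h
          · exact absurd (h ▸ hk) hn
          · have e : p - 1 + 1 = p := by omega
            rwa [e]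
        exact ih (p-1) (by omega) s hsub'' hmem hfin

noncomputable def Pcons (L : ℕ → Set ℕ) (R : Proc1Run L) (f : ℕ → ℕ) (l : List ℕ) : Finset ℕ :=
  (Finset.range (f l.length)).filter fun p => ↑l.toFinset ⊆ L ((R.ord (f l.length)).getD p 0)

noncomputable def Acap (L : ℕ → Set ℕ) (R : Proc1Run L) (f : ℕ → ℕ) (l : List ℕ) (c : ℕ) :
    Set ℕ :=
  ⋂ p ∈ (Pcons L R f l).filter (· ≤ c), L ((R.ord (f l.length)).getD p 0)

noncomputable def Dgood (L : ℕ → Set ℕ) (R : Proc1Run L) (f : ℕ → ℕ) (l : List ℕ) : Finset ℕ :=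
  (Pcons L R f l).filter fun c => (Acap L R f l c).Infinite

noncomputable def genAlg (L : ℕ → Set ℕ) (R : Proc1Run L) (f : ℕ → ℕ) (l : List ℕ) : ℕ :=
  sInf (Acap L R f l (Finset.sup (Dgood L R f l) id) \ ↑l.toFinset)

lemma biInter_finset_image (s : Finset ℕ) (g : ℕ → ℕ) (F : ℕ → Set ℕ) :
    ⋂ k ∈ s.image g, F k = ⋂ p ∈ s, F (g p) := by
  ext a; simp only [Set.mem_iInter, Finset.mem_image]; aesop

/-- Theorem 3.5: non-uniform generation times. For any non-decreasing
`f : ℕ → ℕ` tending to infinity, there is an algorithm non-uniformly generating from `L`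
with generation times `t*(L_i) ≤ max (g i) (m*(L_i) + 1)`, where `g i` is the smallest
`j` with `f j ≥ i` (0-based: `f j ≥ i + 1`). -/
theorem stmt_3 (L : ℕ → Set ℕ) (hL : ∀ i, (L i).Infinite) (R : Proc1Run L)
    (f : ℕ → ℕ) (hf : Monotone f)
    (hftop : Filter.Tendsto f Filter.atTop Filter.atTop) :
    ∃ (G : List ℕ → ℕ) (tG : ℕ → ℕ), NonUniformGen G L tG ∧
      ∀ i, tG i ≤ max (sInf {j : ℕ | i + 1 ≤ f j}) (R.mstar i + 1) := by
  classical
  refine ⟨genAlg L R f, fun i => max (sInf {j : ℕ | i + 1 ≤ f j}) (R.mstar i + 1), ?_,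
    fun i => le_rfl⟩
  intro i x hx t ht hcard
  set l := inputList x t with hl
  have hlen : l.length = t := by simp [hl, inputList]
  have hSl : Sfin x t = l.toFinset := rfl
  set S := l.toFinset with hSdef
  have hSsub : ↑S ⊆ L i := by
    intro a ha
    simp only [hSdef, Finset.coe_sort_coe, Finset.mem_coe, List.mem_toFinset, hl, inputList,
      List.mem_map, List.mem_range] at ha
    obtain ⟨u, _, hu⟩ := ha
    exact hu ▸ hx.1 u
  have hSt : S.card ≤ t := hlen ▸ List.toFinset_card_le l
  have hmcard : R.mstar i + 1 ≤ S.card := le_trans (le_max_right _ _) hcard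
  -- `i < n` where n := f t
  have hne : {j : ℕ | i + 1 ≤ f j}.Nonempty := by
    obtain ⟨j, hj⟩ := (hftop.eventually_ge_atTop (i + 1)).exists
    exact ⟨j, hj⟩
  have hgi : i + 1 ≤ f (sInf {j : ℕ | i + 1 ≤ f j}) := Nat.sInf_mem hne
  have hisn : i + 1 ≤ f t :=
    le_trans hgi (hf (le_trans (le_trans (le_max_left _ _) hcard) hSt))
  set n := f t with hn
  have hfln : f l.length = n := by rw [hlen]
  -- position of i in ord n
  have hiord : i ∈ R.ord n := (mem_ord R n i).mpr (by omega)
  obtain ⟨pi, hpilen, hpi⟩ := List.mem_iff_getElem.mp hiord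
  have hpin : pi < n := by rw [← length_ord R n]; exact hpilen
  have hpiD : (R.ord n).getD pi 0 = i := by rw [List.getD_eq_getElem _ _ hpilen, hpi]
  have hPmem : pi ∈ Pcons L R f l := by
    simp only [Pcons, Finset.mem_filter, Finset.mem_range, hfln]
    exact ⟨hpin, hpiD ▸ hSsub⟩
  -- key claim
  have hkey : ∀ c ∈ Pcons L R f l, c ≤ pi → (Acap L R f l c).Infinite := by
    intro c hc hcpi
    by_contra hinf
    have hfin : (Acap L R f l c).Finite := Set.not_infinite.mp hinf
    have hcn : c < n := by
      have := (Finset.mem_filter.mp hc).1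
      rw [hfln] at this
      exact Finset.mem_range.mp this
    set Q := (Pcons L R f l).filter (· ≤ c) with hQ
    set s : Finset ℕ := Q.image (fun p => (R.ord n).getD p 0) with hs
    have hAs : Acap L R f l c = ⋂ k ∈ s, L k := by
      rw [hs, biInter_finset_image]
      simp only [Acap, hfln, hQ]
    have hsub : ∀ k ∈ s, k ∈ (R.ord n).take (c+1) := by
      intro k hk
      obtain ⟨p, hp, hpk⟩ := Finset.mem_image.mp hk
      have hpc : p ≤ c := by simpa using (Finset.mem_filter.mp hp).2
      have hpn : p < n := by
        have := (Finset.mem_filter.mp (Finset.mem_filter.mp hp).1).1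
        rw [hfln] at this
        exact Finset.mem_range.mp this
      have hplen : p < (R.ord n).length := by rw [length_ord]; omega
      have hptake : p < ((R.ord n).take (c+1)).length := by
        rw [List.length_take, length_ord]; omega
      have : ((R.ord n).take (c+1))[p] = k := by
        rw [List.getElem_take, ← List.getD_eq_getElem _ 0 hplen, hpk]
      exact this ▸ List.getElem_mem hptake
    have hmemc : (R.ord n).getD c 0 ∈ s := by
      refine Finset.mem_image_of_mem _ ?_
      rw [hQ]
      exact Finset.mem_filter.mpr ⟨hc, by simp⟩
    have hb1 : (⋂ k ∈ s, L k).ncard ≤ R.mstar ((R.ord n).getD c 0) :=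
      inv R n c hcn s hsub hmemc (hAs ▸ hfin)
    have hb2 : R.mstar ((R.ord n).getD c 0) ≤ R.mstar i :=
      hpiD ▸ mstar_mono R n pi c hcpi hpin
    have hSA : ↑S ⊆ Acap L R f l c := by
      intro a ha
      simp only [Acap, Set.mem_iInter]
      intro p hp
      exact (Finset.mem_filter.mp (Finset.mem_filter.mp hp).1).2 ha
    have hb3 : S.card ≤ (Acap L R f l c).ncard := by
      rw [← Set.ncard_coe_finset]
      exact Set.ncard_le_ncard hSA hfin
    rw [hAs] at hb3
    omega
  have hpiDg : pi ∈ Dgood L R f l :=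
    Finset.mem_filter.mpr ⟨hPmem, hkey pi hPmem le_rfl⟩
  set cs := Finset.sup (Dgood L R f l) id with hcs
  obtain ⟨b, hbD, hbeq⟩ := Finset.exists_mem_eq_sup (Dgood L R f l) ⟨pi, hpiDg⟩ id
  have hcsD : cs ∈ Dgood L R f l := by rw [hcs, hbeq]; exact hbD
  have hAinf : (Acap L R f l cs).Infinite := (Finset.mem_filter.mp hcsD).2
  have hpics : pi ≤ cs := Finset.le_sup (f := id) hpiDg
  have hAsubL : Acap L R f l cs ⊆ L i := by
    intro a ha
    simp only [Acap, Set.mem_iInter] at ha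
    have h2 := ha pi (Finset.mem_filter.mpr ⟨hPmem, by simpa using hpics⟩)
    rw [hfln, hpiD] at h2
    exact h2
  have hdiff : (Acap L R f l cs \ ↑S).Infinite := hAinf.diff (S.finite_toSet)
  have hGmem : genAlg L R f l ∈ Acap L R f l cs \ ↑S :=
    Nat.sInf_mem hdiff.nonempty
  rw [hSl]
  exact ⟨hAsubL hGmem.1, hGmem.2⟩
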